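/- Let A be a unital associative k-algebra and α, β ∈ k with α ≠ 0 and β ≠ 0. Then the linear map R : A ⊗ A → A ⊗ A defined by R(a ⊗ b) = α·ab ⊗ 1 + β·1 ⊗ ab − α·a ⊗ b satisfies the braid equation R¹² ∘ R²³ ∘ R¹² = R²³ ∘ R¹² ∘ R²³ on A ⊗ A ⊗ A. -/

import Mathlib

open TensorProduct

noncomputable def r12 (k V : Type*) [Field k] [AddCommGroup V] [Module k V]
    (R : V ⊗[k] V →ₗ[k] V ⊗[k] V) :
    (V ⊗[k] V) ⊗[k] V →ₗ[k] (V ⊗[k] V) ⊗[k] V :=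
  TensorProduct.map R LinearMap.id

noncomputable def r23 (k V : Type*) [Field k] [AddCommGroup V] [Module k V]
    (R : V ⊗[k] V →ₗ[k] V ⊗[k] V) :
    (V ⊗[k] V) ⊗[k] V →ₗ[k] (V ⊗[k] V) ⊗[k] V :=
  (TensorProduct.assoc k V V V).symm.toLinearMap ∘ₗ
    TensorProduct.map LinearMap.id R ∘ₗ (TensorProduct.assoc k V V V).toLinearMap

noncomputable def tau (k V : Type*) [Field k] [AddCommGroup V] [Module k V] :
    V ⊗[k] V →ₗ[k] V ⊗[k] V :=
  (TensorProduct.comm k V V).toLinearMap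

noncomputable def r13 (k V : Type*) [Field k] [AddCommGroup V] [Module k V]
    (R : V ⊗[k] V →ₗ[k] V ⊗[k] V) :
    (V ⊗[k] V) ⊗[k] V →ₗ[k] (V ⊗[k] V) ⊗[k] V :=
  r23 k V (tau k V) ∘ₗ r12 k V R ∘ₗ r23 k V (tau k V)

/-- The braid equation. -/
def IsBraid (k V : Type*) [Field k] [AddCommGroup V] [Module k V]
    (R : V ⊗[k] V →ₗ[k] V ⊗[k] V) : Prop :=
  r12 k V R ∘ₗ r23 k V R ∘ₗ r12 k V R = r23 k V R ∘ₗ r12 k V R ∘ₗ r23 k V R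

/-- The (constant) quantum Yang–Baxter equation. -/
def IsQYBE (k V : Type*) [Field k] [AddCommGroup V] [Module k V]
    (R : V ⊗[k] V →ₗ[k] V ⊗[k] V) : Prop :=
  r12 k V R ∘ₗ r13 k V R ∘ₗ r23 k V R = r23 k V R ∘ₗ r13 k V R ∘ₗ r12 k V R

theorem braid_of_algebra_case_i
    (k A : Type*) [Field k] [Ring A] [Algebra k A]
    (α β : k) (hα : α ≠ 0) (hβ : β ≠ 0)
    (R : A ⊗[k] A →ₗ[k] A ⊗[k] A)
    (hR : ∀ a b : A, R (a ⊗ₜ b) =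
      α • ((a * b) ⊗ₜ (1 : A)) + β • ((1 : A) ⊗ₜ (a * b)) - α • (a ⊗ₜ b)) :
    IsBraid k A R := by
  unfold IsBraid r12 r23
  apply TensorProduct.ext
  apply TensorProduct.ext
  ext a b c
  simp only [LinearMap.compr₂ₛₗ_apply, TensorProduct.mk_apply, LinearMap.comp_apply,
    LinearEquiv.coe_coe, TensorProduct.map_tmul, TensorProduct.assoc_tmul,
    TensorProduct.assoc_symm_tmul, LinearMap.id_coe, id_eq, hR,
    map_add, map_sub, map_smul, TensorProduct.tmul_add, TensorProduct.tmul_sub,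
    TensorProduct.add_tmul, TensorProduct.sub_tmul, TensorProduct.tmul_smul,
    ← TensorProduct.smul_tmul', one_mul, mul_one, mul_assoc, smul_mul_assoc, mul_smul_comm]
  module
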